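/- Consider the greedy multiscale method: let f* : [ℓ,u] → ℝ be L-Lipschitz, let S ≥ 1, and for each scale s = 1,…,S let x*_s ∈ ℝ^{I_s}, with I_s = 2^{S−s+1} + 1, be the exact samples of f* on the uniform grid with I_s points. Suppose vectors x_s^0, x_s^{K_s} ∈ ℝ^{I_s} satisfy: (i) iterate convergence at each scale, ‖x_s^{K_s} − x*_s‖₂ ≤ q^{K_s}·‖x_s^0 − x*_s‖₂ with rate q ∈ [0,1); and (ii) warm starting, x_s^0 = midpoint linear interpolation of x_{s+1}^{K_{s+1}} for s = 1,…,S−1. Then the finest-scale iterate satisfies ‖x_1^{K_1} − x*_1‖₂ ≤ √(2^{S−1})·q^{r_S}·‖x_S^0 − x*_S‖₂ + L·(u−ℓ)/(2·√(2^{S+1}))·Σ_{s=1}^{S−1} 2^s·q^{r_s}, where r_s = Σ_{t=1}^{s} K_t. -/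

import Mathlib

open Finset

/-- Uniform grid with `I` points on `[l, u]` (0-indexed): `t[i] = l + i·(u−l)/(I−1)`. -/
noncomputable def unifGrid (l u : ℝ) (I : ℕ) (i : ℕ) : ℝ := l + i * (u - l) / ((I : ℝ) - 1)

/-- Midpoint linear interpolation (0-indexed): even entries copy `x`, odd entries are midpoints. -/
noncomputable def midInterp (x : ℕ → ℝ) (j : ℕ) : ℝ :=
  if j % 2 = 0 then x (j / 2) else (x (j / 2) + x (j / 2 + 1)) / 2

/-- Euclidean norm of the first `n` entries. -/
noncomputable def vnorm (n : ℕ) (x : ℕ → ℝ) : ℝ := Real.sqrt (∑ i ∈ range n, x i ^ 2)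

lemma vnorm_nonneg (n : ℕ) (x : ℕ → ℝ) : 0 ≤ vnorm n x := Real.sqrt_nonneg _

lemma vnorm_congr (n : ℕ) (x y : ℕ → ℝ) (h : ∀ i < n, x i = y i) : vnorm n x = vnorm n y := by
  unfold vnorm
  rw [sum_congr rfl fun i hi => by rw [h i (mem_range.mp hi)]]

lemma vnorm_add_le (n : ℕ) (f g h : ℕ → ℝ) (hf : ∀ i < n, f i = g i + h i) :
    vnorm n f ≤ vnorm n g + vnorm n h := by
  unfold vnorm
  set A := ∑ i ∈ range n, g i ^ 2 with hAdef
  set B := ∑ i ∈ range n, h i ^ 2 with hBdef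
  have hA : 0 ≤ A := sum_nonneg fun i _ => sq_nonneg _
  have hB : 0 ≤ B := sum_nonneg fun i _ => sq_nonneg _
  have hC : ∑ i ∈ range n, g i * h i ≤ Real.sqrt A * Real.sqrt B := by
    calc ∑ i ∈ range n, g i * h i ≤ |∑ i ∈ range n, g i * h i| := le_abs_self _
      _ = Real.sqrt ((∑ i ∈ range n, g i * h i) ^ 2) := (Real.sqrt_sq_eq_abs _).symm
      _ ≤ Real.sqrt (A * B) :=
          Real.sqrt_le_sqrt (Finset.sum_mul_sq_le_sq_mul_sq (range n) g h)
      _ = Real.sqrt A * Real.sqrt B := Real.sqrt_mul hA _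
  have hsum : ∑ i ∈ range n, f i ^ 2 ≤ (Real.sqrt A + Real.sqrt B) ^ 2 := by
    have e1 : ∑ i ∈ range n, f i ^ 2 = A + 2 * (∑ i ∈ range n, g i * h i) + B := by
      rw [hAdef, hBdef, mul_sum, ← sum_add_distrib, ← sum_add_distrib]
      exact sum_congr rfl fun i hi => by rw [hf i (mem_range.mp hi)]; ring
    rw [e1, add_sq, Real.sq_sqrt hA, Real.sq_sqrt hB]
    nlinarith [hC]
  calc Real.sqrt (∑ i ∈ range n, f i ^ 2) ≤ Real.sqrt ((Real.sqrt A + Real.sqrt B) ^ 2) :=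
        Real.sqrt_le_sqrt hsum
    _ = Real.sqrt A + Real.sqrt B :=
        Real.sqrt_sq (by positivity)

lemma midInterp_sq_sum (x : ℕ → ℝ) (n : ℕ) :
    ∑ j ∈ range (2 * n + 1), (midInterp x j) ^ 2 + (x 0 ^ 2 + x n ^ 2) / 2 ≤
      2 * ∑ i ∈ range (n + 1), x i ^ 2 := by
  induction n with
  | zero =>
      simp [midInterp]
      nlinarith [sq_nonneg (x 0)]
  | succ n ih =>
      have h1 : 2 * (n + 1) + 1 = (2 * n + 1) + 1 + 1 := by ring
      have hR : ∑ i ∈ range (n + 1 + 1), x i ^ 2 = ∑ i ∈ range (n + 1), x i ^ 2 + x (n + 1) ^ 2 :=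
        sum_range_succ _ _
      rw [h1, sum_range_succ _ (2 * n + 1 + 1), sum_range_succ _ (2 * n + 1), hR]
      have e1 : midInterp x (2 * n + 1) = (x n + x (n + 1)) / 2 := by
        have : (2 * n + 1) % 2 = 1 := by omega
        have h2 : (2 * n + 1) / 2 = n := by omega
        simp [midInterp, this, h2]
      have e2 : midInterp x (2 * n + 1 + 1) = x (n + 1) := by
        have : (2 * n + 1 + 1) % 2 = 0 := by omega
        have h2 : (2 * n + 1 + 1) / 2 = n + 1 := by omega
        simp [midInterp, this, h2]
      rw [e1, e2]
      nlinarith [sq_nonneg (x n - x (n + 1)), ih]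

lemma vnorm_midInterp_le (x : ℕ → ℝ) (n : ℕ) :
    vnorm (2 * n + 1) (midInterp x) ≤ Real.sqrt 2 * vnorm (n + 1) x := by
  unfold vnorm
  rw [← Real.sqrt_mul (by norm_num : (0:ℝ) ≤ 2)]
  apply Real.sqrt_le_sqrt
  nlinarith [midInterp_sq_sum x n, sq_nonneg (x 0), sq_nonneg (x n)]

lemma vnorm_sparse_le (n : ℕ) (g : ℕ → ℝ) (c : ℝ) (hc : 0 ≤ c)
    (heven : ∀ j < 2 * n + 1, j % 2 = 0 → g j = 0)
    (hodd : ∀ j < 2 * n + 1, j % 2 = 1 → |g j| ≤ c) :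
    vnorm (2 * n + 1) g ≤ Real.sqrt n * c := by
  have key : ∑ j ∈ range (2 * n + 1), g j ^ 2 ≤ n * c ^ 2 := by
    induction n with
    | zero =>
        have h0 : g 0 = 0 := heven 0 (by omega) (by omega)
        simp [h0]
    | succ n ih =>
        have h1 : 2 * (n + 1) + 1 = (2 * n + 1) + 1 + 1 := by ring
        rw [h1, sum_range_succ, sum_range_succ]
        have e2 : g (2 * n + 1 + 1) = 0 := heven _ (by omega) (by omega)
        have e1 : |g (2 * n + 1)| ≤ c := hodd _ (by omega) (by omega)
        have e1' : g (2 * n + 1) ^ 2 ≤ c ^ 2 := by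
          rw [← sq_abs]; exact pow_le_pow_left₀ (abs_nonneg _) e1 2
        have ih' := ih (fun j hj h2 => heven j (by omega) h2) (fun j hj h2 => hodd j (by omega) h2)
        rw [e2]
        push_cast
        nlinarith [ih']
  unfold vnorm
  calc Real.sqrt (∑ j ∈ range (2 * n + 1), g j ^ 2) ≤ Real.sqrt ((n : ℝ) * c ^ 2) :=
        Real.sqrt_le_sqrt key
    _ = Real.sqrt n * c := by
        rw [Real.sqrt_mul (Nat.cast_nonneg n), Real.sqrt_sq hc]

lemma grid_even (l u : ℝ) (n : ℕ) (hn : 1 ≤ n) (i : ℕ) :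
    unifGrid l u (2 * n + 1) (2 * i) = unifGrid l u (n + 1) i := by
  have hn' : (n : ℝ) ≠ 0 := Nat.cast_ne_zero.mpr (by omega)
  unfold unifGrid
  push_cast
  field_simp
  ring_nf
  field_simp

lemma grid_odd (l u : ℝ) (n : ℕ) (hn : 1 ≤ n) (i : ℕ) :
    unifGrid l u (2 * n + 1) (2 * i + 1) =
      (unifGrid l u (n + 1) i + unifGrid l u (n + 1) (i + 1)) / 2 := by
  have hn' : (n : ℝ) ≠ 0 := Nat.cast_ne_zero.mpr (by omega)
  unfold unifGrid
  push_cast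
  field_simp
  ring_nf
  field_simp
  ring

lemma grid_mem (l u : ℝ) (hlu : l < u) (n : ℕ) (hn : 1 ≤ n) (i : ℕ) (hi : i ≤ n) :
    unifGrid l u (n + 1) i ∈ Set.Icc l u := by
  have hn' : (0 : ℝ) < n := by exact_mod_cast Nat.pos_of_ne_zero (by omega)
  have hi' : (i : ℝ) ≤ n := by exact_mod_cast hi
  have hi0 : (0 : ℝ) ≤ i := Nat.cast_nonneg i
  have hul : (0 : ℝ) ≤ u - l := by linarith
  unfold unifGrid
  push_cast
  have hsimp : ((n : ℝ) + 1 - 1) = n := by ring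
  rw [hsimp]
  constructor
  · have : 0 ≤ (i : ℝ) * (u - l) / n := by positivity
    linarith
  · have : (i : ℝ) * (u - l) / n ≤ u - l := by
      rw [div_le_iff₀ hn']
      nlinarith
    linarith

lemma midInterp_sub (y z : ℕ → ℝ) (j : ℕ) :
    midInterp (fun i => y i - z i) j = midInterp y j - midInterp z j := by
  unfold midInterp
  split <;> ring

lemma odd_pt_bound (l u : ℝ) (hlu : l < u) (fstar : ℝ → ℝ) (L : ℝ)
    (hfLip : ∀ a ∈ Set.Icc l u, ∀ b ∈ Set.Icc l u, |fstar a - fstar b| ≤ L * |a - b|)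
    (n : ℕ) (hn : 1 ≤ n) (i : ℕ) (hi : i < n) :
    |(fstar (unifGrid l u (n + 1) i) + fstar (unifGrid l u (n + 1) (i + 1))) / 2 -
        fstar (unifGrid l u (2 * n + 1) (2 * i + 1))| ≤ L * (u - l) / (2 * n) := by
  have hn' : (0 : ℝ) < n := by exact_mod_cast Nat.pos_of_ne_zero (by omega)
  rw [grid_odd l u n hn i]
  set a := unifGrid l u (n + 1) i with hadef
  set b := unifGrid l u (n + 1) (i + 1) with hbdef
  have hab : b - a = (u - l) / n := by
    rw [hadef, hbdef]; unfold unifGrid; push_cast; field_simp; ring_nf; field_simp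
  have haI : a ∈ Set.Icc l u := grid_mem l u hlu n hn i (by omega)
  have hbI : b ∈ Set.Icc l u := grid_mem l u hlu n hn (i + 1) (by omega)
  obtain ⟨h1, h2⟩ := haI
  obtain ⟨h3, h4⟩ := hbI
  have hmI : (a + b) / 2 ∈ Set.Icc l u := ⟨by linarith, by linarith⟩
  have hba : 0 < b - a := by rw [hab]; exact div_pos (by linarith) hn'
  have e1 := hfLip a ⟨h1, h2⟩ ((a + b) / 2) hmI
  have e2 := hfLip b ⟨h3, h4⟩ ((a + b) / 2) hmI
  have habs1 : |a - (a + b) / 2| = (b - a) / 2 := by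
    rw [abs_of_nonpos (by linarith)]; ring
  have habs2 : |b - (a + b) / 2| = (b - a) / 2 := by
    rw [abs_of_nonneg (by linarith)]; ring
  rw [habs1] at e1
  rw [habs2] at e2
  have key : L * ((b - a) / 2) = L * (u - l) / (2 * n) := by rw [hab]; ring
  rw [key] at e1 e2
  obtain ⟨e1a, e1b⟩ := abs_le.mp e1
  obtain ⟨e2a, e2b⟩ := abs_le.mp e2
  rw [abs_le]
  exact ⟨by linarith, by linarith⟩

lemma warm_error (l u : ℝ) (hlu : l < u) (fstar : ℝ → ℝ) (L : ℝ) (hL : 0 ≤ L)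
    (hfLip : ∀ a ∈ Set.Icc l u, ∀ b ∈ Set.Icc l u, |fstar a - fstar b| ≤ L * |a - b|)
    (n : ℕ) (hn : 1 ≤ n) (y : ℕ → ℝ) :
    vnorm (2 * n + 1) (fun j => midInterp y j - fstar (unifGrid l u (2 * n + 1) j)) ≤
      Real.sqrt 2 * vnorm (n + 1) (fun i => y i - fstar (unifGrid l u (n + 1) i)) +
        Real.sqrt n * (L * (u - l) / (2 * n)) := by
  have hn' : (0 : ℝ) < n := by exact_mod_cast Nat.pos_of_ne_zero (by omega)
  have hul : (0 : ℝ) ≤ u - l := by linarith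
  have tri : vnorm (2 * n + 1) (fun j => midInterp y j - fstar (unifGrid l u (2 * n + 1) j)) ≤
      vnorm (2 * n + 1) (midInterp (fun i => y i - fstar (unifGrid l u (n + 1) i))) +
        vnorm (2 * n + 1) (fun j => midInterp (fun i => fstar (unifGrid l u (n + 1) i)) j -
          fstar (unifGrid l u (2 * n + 1) j)) := by
    apply vnorm_add_le
    intro j hj
    rw [midInterp_sub]
    ring
  have part1 : vnorm (2 * n + 1) (midInterp (fun i => y i - fstar (unifGrid l u (n + 1) i))) ≤
      Real.sqrt 2 * vnorm (n + 1) (fun i => y i - fstar (unifGrid l u (n + 1) i)) :=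
    vnorm_midInterp_le _ n
  have part2 : vnorm (2 * n + 1) (fun j => midInterp (fun i => fstar (unifGrid l u (n + 1) i)) j -
      fstar (unifGrid l u (2 * n + 1) j)) ≤ Real.sqrt n * (L * (u - l) / (2 * n)) := by
    apply vnorm_sparse_le
    · positivity
    · intro j hj hj2
      obtain ⟨i, rfl⟩ : ∃ i, j = 2 * i := ⟨j / 2, by omega⟩
      have hdiv : 2 * i / 2 = i := by omega
      have hmid : midInterp (fun k => fstar (unifGrid l u (n + 1) k)) (2 * i) =
          fstar (unifGrid l u (n + 1) i) := by
        simp [midInterp, Nat.mul_mod_right, hdiv]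
      rw [hmid, grid_even l u n hn i, sub_self]
    · intro j hj hj2
      obtain ⟨i, rfl⟩ : ∃ i, j = 2 * i + 1 := ⟨j / 2, by omega⟩
      have hi : i < n := by omega
      have h2 : (2 * i + 1) % 2 = 1 := by omega
      have h3 : (2 * i + 1) / 2 = i := by omega
      have hmid : midInterp (fun k => fstar (unifGrid l u (n + 1) k)) (2 * i + 1) =
          (fstar (unifGrid l u (n + 1) i) + fstar (unifGrid l u (n + 1) (i + 1))) / 2 := by
        simp [midInterp, h2, h3]
      rw [hmid]
      exact odd_pt_bound l u hlu fstar L hfLip n hn i hi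
  calc vnorm (2 * n + 1) (fun j => midInterp y j - fstar (unifGrid l u (2 * n + 1) j)) ≤ _ := tri
    _ ≤ _ := add_le_add part1 part2

lemma sqrt_two_pow (m : ℕ) : Real.sqrt ((2:ℝ) ^ m) = (Real.sqrt 2) ^ m := by
  induction m with
  | zero => simp
  | succ m ih => rw [pow_succ, pow_succ, Real.sqrt_mul (by positivity), ih]

lemma unroll_aux (M : ℕ) (a ρ γ : ℕ → ℝ) (E : ℝ)
    (hρ : ∀ m, 0 ≤ ρ m)
    (h0 : a 0 ≤ ρ 0 * E)
    (hrec : ∀ m, m + 1 ≤ M → a (m + 1) ≤ ρ (m + 1) * (Real.sqrt 2 * a m + γ (m + 1))) :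
    ∀ m ≤ M, a m ≤ (Real.sqrt 2) ^ m * (∏ j ∈ range (m + 1), ρ j) * E +
      ∑ j ∈ Icc 1 m, (Real.sqrt 2) ^ (m - j) * (∏ i ∈ Icc j m, ρ i) * γ j := by
  intro m
  induction m with
  | zero => intro _; simpa using h0
  | succ m ih =>
      intro hm
      have ihm := ih (by omega)
      have s2 : (0:ℝ) ≤ Real.sqrt 2 := Real.sqrt_nonneg 2
      calc a (m + 1) ≤ ρ (m + 1) * (Real.sqrt 2 * a m + γ (m + 1)) := hrec m hm
        _ ≤ ρ (m + 1) * (Real.sqrt 2 * ((Real.sqrt 2) ^ m * (∏ j ∈ range (m + 1), ρ j) * E +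
              ∑ j ∈ Icc 1 m, (Real.sqrt 2) ^ (m - j) * (∏ i ∈ Icc j m, ρ i) * γ j) + γ (m + 1)) := by
            apply mul_le_mul_of_nonneg_left _ (hρ _)
            have h2 := mul_le_mul_of_nonneg_left ihm s2
            linarith
        _ = (Real.sqrt 2) ^ (m + 1) * (∏ j ∈ range (m + 1 + 1), ρ j) * E +
              ∑ j ∈ Icc 1 (m + 1), (Real.sqrt 2) ^ (m + 1 - j) * (∏ i ∈ Icc j (m + 1), ρ i) * γ j := by
            rw [Finset.sum_Icc_succ_top (by omega : 1 ≤ m + 1)]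
            rw [Nat.sub_self, pow_zero, Finset.Icc_self, Finset.prod_singleton, one_mul]
            rw [Finset.prod_range_succ ρ (m + 1), pow_succ]
            have hS : ∑ j ∈ Icc 1 m, (Real.sqrt 2) ^ (m + 1 - j) * (∏ i ∈ Icc j (m + 1), ρ i) * γ j =
                ∑ j ∈ Icc 1 m, ρ (m + 1) * Real.sqrt 2 *
                  ((Real.sqrt 2) ^ (m - j) * (∏ i ∈ Icc j m, ρ i) * γ j) := by
              apply sum_congr rfl
              intro j hj
              have hjm : j ≤ m := (mem_Icc.mp hj).2
              rw [Finset.prod_Icc_succ_top (by omega : j ≤ m + 1)]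
              rw [show m + 1 - j = (m - j) + 1 from by omega, pow_succ]
              ring
            rw [hS, ← Finset.mul_sum]
            ring

lemma scalar_id (X : ℝ) (S j : ℕ) (hS : 1 ≤ S) (hj1 : 1 ≤ j) (hj2 : j ≤ S - 1) :
    (Real.sqrt 2) ^ (S - 1 - j) * ((Real.sqrt 2) ^ j * (X / (2 * (2:ℝ) ^ j))) =
      X / (2 * (Real.sqrt 2) ^ (S + 1)) * (2:ℝ) ^ (S - j) := by
  have hA2 : (Real.sqrt 2) ^ 2 = 2 := Real.sq_sqrt (by norm_num)
  have hApos : (0:ℝ) < Real.sqrt 2 := Real.sqrt_pos.mpr (by norm_num)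
  have key1 : (Real.sqrt 2) ^ (S - 1 - j) * (Real.sqrt 2) ^ j = (Real.sqrt 2) ^ (S - 1) := by
    rw [← pow_add]; congr 1; omega
  have key2 : (Real.sqrt 2) ^ (S - 1) * (Real.sqrt 2) ^ (S + 1) = (2:ℝ) ^ S := by
    rw [← pow_add, show (S - 1) + (S + 1) = 2 * S from by omega, pow_mul, hA2]
  have key3 : (2:ℝ) ^ (S - j) * (2:ℝ) ^ j = (2:ℝ) ^ S := by
    rw [← pow_add]; congr 1; omega
  have l1 : (Real.sqrt 2) ^ (S - 1 - j) * ((Real.sqrt 2) ^ j * (X / (2 * (2:ℝ) ^ j))) =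
      ((Real.sqrt 2) ^ (S - 1 - j) * (Real.sqrt 2) ^ j * X) / (2 * (2:ℝ) ^ j) := by ring
  have l2 : X / (2 * (Real.sqrt 2) ^ (S + 1)) * (2:ℝ) ^ (S - j) =
      (X * (2:ℝ) ^ (S - j)) / (2 * (Real.sqrt 2) ^ (S + 1)) := by ring
  rw [l1, l2, div_eq_div_iff (by positivity) (by positivity)]
  linear_combination 2 * X * (Real.sqrt 2) ^ (S + 1) * key1 + 2 * X * key2 - 2 * X * key3

/-- Greedy multiscale error bound.  Scale `s = 1` is finest, `s = S` coarsest, and the grid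
at scale `s` has `I_s = 2^(S−s+1) + 1` points. -/
theorem greedy_multiscale_error_bound
    (l u : ℝ) (hlu : l < u) (S : ℕ) (hS : 1 ≤ S)
    (fstar : ℝ → ℝ) (L q : ℝ) (hq0 : 0 ≤ q) (hq1 : q < 1)
    (hfLip : ∀ a ∈ Set.Icc l u, ∀ b ∈ Set.Icc l u, |fstar a - fstar b| ≤ L * |a - b|)
    (K : ℕ → ℕ)
    (xstar x0 xK : ℕ → ℕ → ℝ)
    (hxstar : ∀ s, 1 ≤ s → s ≤ S → ∀ i < 2 ^ (S - s + 1) + 1,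
      xstar s i = fstar (unifGrid l u (2 ^ (S - s + 1) + 1) i))
    (hconv : ∀ s, 1 ≤ s → s ≤ S →
      vnorm (2 ^ (S - s + 1) + 1) (fun i => xK s i - xstar s i) ≤
        q ^ K s * vnorm (2 ^ (S - s + 1) + 1) (fun i => x0 s i - xstar s i))
    (hwarm : ∀ s, 1 ≤ s → s < S → ∀ j < 2 ^ (S - s + 1) + 1,
      x0 s j = midInterp (xK (s + 1)) j) :
    vnorm (2 ^ S + 1) (fun i => xK 1 i - xstar 1 i) ≤
      Real.sqrt ((2 : ℝ) ^ (S - 1)) * q ^ (∑ t ∈ Finset.Icc 1 S, K t) *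
          vnorm 3 (fun i => x0 S i - xstar S i) +
        L * (u - l) / (2 * Real.sqrt ((2 : ℝ) ^ (S + 1))) *
          ∑ s ∈ Finset.Icc 1 (S - 1), (2 : ℝ) ^ s * q ^ (∑ t ∈ Finset.Icc 1 s, K t) := by
  have hul : (0:ℝ) < u - l := by linarith
  have hL : 0 ≤ L := by
    have h := hfLip u ⟨le_of_lt hlu, le_refl u⟩ l ⟨le_refl l, le_of_lt hlu⟩
    have h2 : |u - l| = u - l := abs_of_pos hul
    rw [h2] at h
    nlinarith [abs_nonneg (fstar u - fstar l)]
  set E := vnorm 3 (fun i => x0 S i - xstar S i) with hE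
  -- base case
  have h0 : vnorm (2 ^ (0 + 1) + 1) (fun i => xK (S - 0) i - xstar (S - 0) i) ≤
      q ^ K (S - 0) * E := by
    have h := hconv S hS le_rfl
    have e : S - S + 1 = 1 := by omega
    rw [e] at h
    simp only [Nat.sub_zero]
    norm_num at h ⊢
    exact h
  -- recursion
  have hrec : ∀ m, m + 1 ≤ S - 1 →
      vnorm (2 ^ (m + 1 + 1) + 1) (fun i => xK (S - (m + 1)) i - xstar (S - (m + 1)) i) ≤
        q ^ K (S - (m + 1)) *
          (Real.sqrt 2 * vnorm (2 ^ (m + 1) + 1) (fun i => xK (S - m) i - xstar (S - m) i) +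
            Real.sqrt ((2:ℝ) ^ (m + 1)) * (L * (u - l) / (2 * (2:ℝ) ^ (m + 1)))) := by
    intro m hm
    have hs1 : 1 ≤ S - (m + 1) := by omega
    have hsS : S - (m + 1) ≤ S := by omega
    have hslt : S - (m + 1) < S := by omega
    have hidx1 : S - (S - (m + 1)) + 1 = m + 1 + 1 := by omega
    have hcv := hconv (S - (m + 1)) hs1 hsS
    rw [hidx1] at hcv
    have hcount : (2:ℕ) ^ (m + 1 + 1) + 1 = 2 * 2 ^ (m + 1) + 1 := by rw [pow_succ]; ring
    have hn1 : 1 ≤ 2 ^ (m + 1) := Nat.one_le_two_pow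
    have hw := warm_error l u hlu fstar L hL hfLip (2 ^ (m + 1)) hn1 (xK (S - (m + 1) + 1))
    have hcong : vnorm (2 ^ (m + 1 + 1) + 1) (fun j => x0 (S - (m + 1)) j - xstar (S - (m + 1)) j) =
        vnorm (2 * 2 ^ (m + 1) + 1) (fun j => midInterp (xK (S - (m + 1) + 1)) j -
          fstar (unifGrid l u (2 * 2 ^ (m + 1) + 1) j)) := by
      rw [hcount]
      apply vnorm_congr
      intro j hj
      have hj' : j < 2 ^ (S - (S - (m + 1)) + 1) + 1 := by rw [hidx1, hcount]; omega
      rw [hwarm (S - (m + 1)) hs1 hslt j hj', hxstar (S - (m + 1)) hs1 hsS j hj', hidx1, hcount]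
    have hcong2 : vnorm (2 ^ (m + 1) + 1)
        (fun i => xK (S - (m + 1) + 1) i - fstar (unifGrid l u (2 ^ (m + 1) + 1) i)) =
        vnorm (2 ^ (m + 1) + 1) (fun i => xK (S - (m + 1) + 1) i - xstar (S - (m + 1) + 1) i) := by
      apply vnorm_congr
      intro i hi
      have h1 : 1 ≤ S - (m + 1) + 1 := by omega
      have h2 : S - (m + 1) + 1 ≤ S := by omega
      have hidx : S - (S - (m + 1) + 1) + 1 = m + 1 := by omega
      have hi' : i < 2 ^ (S - (S - (m + 1) + 1) + 1) + 1 := by rw [hidx]; omega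
      rw [hxstar (S - (m + 1) + 1) h1 h2 i hi', hidx]
    have hcast : ((2 ^ (m + 1) : ℕ) : ℝ) = (2:ℝ) ^ (m + 1) := by push_cast; ring
    rw [hcast, hcong2, show S - (m + 1) + 1 = S - m from by omega] at hw
    calc vnorm (2 ^ (m + 1 + 1) + 1) (fun i => xK (S - (m + 1)) i - xstar (S - (m + 1)) i) ≤
        q ^ K (S - (m + 1)) *
          vnorm (2 ^ (m + 1 + 1) + 1) (fun j => x0 (S - (m + 1)) j - xstar (S - (m + 1)) j) := hcv
      _ = q ^ K (S - (m + 1)) * vnorm (2 * 2 ^ (m + 1) + 1)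
            (fun j => midInterp (xK (S - (m + 1) + 1)) j -
              fstar (unifGrid l u (2 * 2 ^ (m + 1) + 1) j)) := by rw [hcong]
      _ ≤ _ := by
          apply mul_le_mul_of_nonneg_left _ (pow_nonneg hq0 _)
          rw [show S - (m + 1) + 1 = S - m from by omega]
          exact hw
  have main := unroll_aux (S - 1)
    (fun m => vnorm (2 ^ (m + 1) + 1) (fun i => xK (S - m) i - xstar (S - m) i))
    (fun m => q ^ K (S - m))
    (fun m => Real.sqrt ((2:ℝ) ^ m) * (L * (u - l) / (2 * (2:ℝ) ^ m)))
    E (fun m => pow_nonneg hq0 _) h0 hrec (S - 1) le_rfl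
  simp only at main
  rw [show S - 1 + 1 = S from by omega, show S - (S - 1) = 1 from by omega] at main
  have hprod : (∏ j ∈ range S, q ^ K (S - j)) = q ^ (∑ t ∈ Finset.Icc 1 S, K t) := by
    rw [Finset.prod_pow_eq_pow_sum]
    congr 1
    refine Finset.sum_nbij' (fun j => S - j) (fun t => S - t) ?_ ?_ ?_ ?_ ?_
    · intro a ha; simp only [mem_range] at ha; simp only [mem_Icc]; omega
    · intro a ha; simp only [mem_Icc] at ha; simp only [mem_range]; omega
    · intro a ha; simp only [mem_range] at ha; omega
    · intro a ha; simp only [mem_Icc] at ha; omega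
    · intro a ha; rfl
  rw [hprod] at main
  have hsum : ∑ j ∈ Icc 1 (S - 1), (Real.sqrt 2) ^ (S - 1 - j) *
        (∏ i ∈ Icc j (S - 1), q ^ K (S - i)) *
        (Real.sqrt ((2:ℝ) ^ j) * (L * (u - l) / (2 * (2:ℝ) ^ j))) =
      L * (u - l) / (2 * Real.sqrt ((2 : ℝ) ^ (S + 1))) *
        ∑ s ∈ Finset.Icc 1 (S - 1), (2 : ℝ) ^ s * q ^ (∑ t ∈ Finset.Icc 1 s, K t) := by
    rw [Finset.mul_sum]
    refine Finset.sum_nbij' (fun j => S - j) (fun s => S - s) ?_ ?_ ?_ ?_ ?_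
    · intro a ha; simp only [mem_Icc] at ha ⊢; omega
    · intro a ha; simp only [mem_Icc] at ha ⊢; omega
    · intro a ha; simp only [mem_Icc] at ha; omega
    · intro a ha; simp only [mem_Icc] at ha; omega
    · intro j hj
      obtain ⟨hj1, hj2⟩ := mem_Icc.mp hj
      have hexp : (∏ i ∈ Icc j (S - 1), q ^ K (S - i)) = q ^ (∑ t ∈ Finset.Icc 1 (S - j), K t) := by
        rw [Finset.prod_pow_eq_pow_sum]
        congr 1
        refine Finset.sum_nbij' (fun i => S - i) (fun t => S - t) ?_ ?_ ?_ ?_ ?_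
        · intro a ha; simp only [mem_Icc] at ha ⊢; omega
        · intro a ha; simp only [mem_Icc] at ha ⊢; omega
        · intro a ha; simp only [mem_Icc] at ha; omega
        · intro a ha; simp only [mem_Icc] at ha; omega
        · intro a ha; rfl
      rw [hexp, sqrt_two_pow j, sqrt_two_pow (S + 1)]
      have sc := scalar_id (L * (u - l)) S j hS hj1 hj2
      linear_combination q ^ (∑ t ∈ Finset.Icc 1 (S - j), K t) * sc
  rw [hsum, ← sqrt_two_pow (S - 1)] at main
  exact main
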